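/- Let n and m be positive integers with 2^m > n!, let Γ₁ and Γ₂ be simple graphs on n vertices, let Γ be their disjoint union, and let H ≤ G = S_n ≀ S_2 be the subgroup of elements acting as automorphisms of Γ. Then for every c ∈ G^m, Γ₁ and Γ₂ are isomorphic if and only if the tensor product of coset states ψ_c satisfies ⟪ψ_c, P₁ ψ_c⟫ = 1. -/

import Mathlib

open scoped Classical

@[ext] structure Wr (n : ℕ) where
  fst : Equiv.Perm (Fin n)
  snd : Equiv.Perm (Fin n)
  bit : ZMod 2
  deriving DecidableEq, Fintype

namespace Wr

variable {n : ℕ}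

protected def mul (x y : Wr n) : Wr n :=
  ⟨if x.bit = 0 then x.fst * y.fst else x.fst * y.snd,
   if x.bit = 0 then x.snd * y.snd else x.snd * y.fst,
   x.bit + y.bit⟩

protected def inv (x : Wr n) : Wr n :=
  ⟨if x.bit = 0 then x.fst⁻¹ else x.snd⁻¹,
   if x.bit = 0 then x.snd⁻¹ else x.fst⁻¹,
   x.bit⟩

instance : Group (Wr n) where
  mul := Wr.mul
  one := ⟨1, 1, 0⟩
  inv := Wr.inv
  mul_assoc x y z := by
    show Wr.mul (Wr.mul x y) z = Wr.mul x (Wr.mul y z)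
    obtain ⟨a, b, c⟩ := x; obtain ⟨d, e, f⟩ := y; obtain ⟨g, h, i⟩ := z
    obtain rfl | rfl : c = 0 ∨ c = 1 := (by decide : ∀ j : ZMod 2, j = 0 ∨ j = 1) c <;> obtain rfl | rfl : f = 0 ∨ f = 1 := (by decide : ∀ j : ZMod 2, j = 0 ∨ j = 1) f <;>
      simp [Wr.mul, mul_assoc, show (1 : ZMod 2) ≠ 0 by decide,
        show (1 + 1 : ZMod 2) = 0 by decide, show ∀ j : ZMod 2, 1 + (1 + j) = j by decide]
  one_mul x := by
    show Wr.mul ⟨1, 1, 0⟩ x = x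
    simp [Wr.mul]
  mul_one x := by
    show Wr.mul x ⟨1, 1, 0⟩ = x
    obtain ⟨a, b, c⟩ := x
    obtain rfl | rfl : c = 0 ∨ c = 1 := (by decide : ∀ j : ZMod 2, j = 0 ∨ j = 1) c <;> simp [Wr.mul]
  inv_mul_cancel x := by
    show Wr.mul (Wr.inv x) x = ⟨1, 1, 0⟩
    obtain ⟨a, b, c⟩ := x
    obtain rfl | rfl : c = 0 ∨ c = 1 := (by decide : ∀ j : ZMod 2, j = 0 ∨ j = 1) c <;> simp [Wr.mul, Wr.inv, show (1 : ZMod 2) ≠ 0 by decide,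
      show (1 + 1 : ZMod 2) = 0 by decide]

/-- An involutive swap: an element of the form `(g, g⁻¹, 1)`. -/
def IsSwap (k : Wr n) : Prop := ∃ g : Equiv.Perm (Fin n), k = ⟨g, g⁻¹, 1⟩

/-- The faithful action of `S_n ≀ S_2` on `Fin n ⊕ Fin n`:
`ι(σ,τ,0)` maps `inl i ↦ inl (σ i)`, `inr i ↦ inr (τ i)`, while
`ι(σ,τ,1)` maps `inl i ↦ inr (τ i)`, `inr i ↦ inl (σ i)`. -/
def iota : Wr n →* Equiv.Perm (Fin n ⊕ Fin n) where
  toFun x := Equiv.sumCongr x.fst x.snd *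
    (if x.bit = 0 then 1 else Equiv.sumComm (Fin n) (Fin n))
  map_one' := by
    simp [show ((1 : Wr n)).bit = 0 from rfl, show ((1 : Wr n)).fst = 1 from rfl,
      show ((1 : Wr n)).snd = 1 from rfl]
  map_mul' x y := by
    have hxy : x * y = Wr.mul x y := rfl
    obtain ⟨a, b, c⟩ := x; obtain ⟨d, e, f⟩ := y
    rw [hxy]
    obtain rfl | rfl : c = 0 ∨ c = 1 := (by decide : ∀ j : ZMod 2, j = 0 ∨ j = 1) c <;> obtain rfl | rfl : f = 0 ∨ f = 1 := (by decide : ∀ j : ZMod 2, j = 0 ∨ j = 1) f <;>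
      · ext u
        rcases u with u | u <;>
          simp [Wr.mul, show (1 : ZMod 2) ≠ 0 by decide,
            show (1 + 1 : ZMod 2) = 0 by decide, Equiv.Perm.mul_apply]

end Wr

/-- The Hilbert space `ℂ[G^m]`. -/
abbrev GIHilb (n m : ℕ) : Type := EuclideanSpace ℂ (Fin m → Wr n)

noncomputable section

namespace Wr

/-- The `k`-vector associated to `c ∈ G^m`:
`x ↦ 2^{-m/2} ∏_i [x i ∈ {c i, c i * k}]`. -/
def kvec (n m : ℕ) (k : Wr n) (c : Fin m → Wr n) : GIHilb n m :=
  (WithLp.equiv 2 _).symm fun x =>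
    ((Real.sqrt (2 ^ m) : ℝ)⁻¹ : ℂ) *
      ∏ i, (if x i = c i ∨ x i = c i * k then (1 : ℂ) else 0)

/-- `ℋ(k)`: the span of all `k`-vectors. -/
def kSpace (n m : ℕ) (k : Wr n) : Submodule ℂ (GIHilb n m) :=
  Submodule.span ℂ (Set.range (kvec n m k))

/-- `ℋ₁ = ∑_k ℋ(k)`, the sum over all involutive swaps `k`. -/
def H1 (n m : ℕ) : Submodule ℂ (GIHilb n m) :=
  ⨆ k ∈ {k : Wr n | IsSwap k}, kSpace n m k

/-- The tensor product of coset states of the subgroup `H` with coset representatives `c`: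
`x ↦ |H|^{-m/2} ∏_i [x i ∈ c i H]`. -/
def cosetState {n : ℕ} (H : Subgroup (Wr n)) (m : ℕ) (c : Fin m → Wr n) : GIHilb n m :=
  (WithLp.equiv 2 _).symm fun x =>
    ((Real.sqrt ((Nat.card H : ℝ) ^ m))⁻¹ : ℂ) *
      ∏ i, (if (c i)⁻¹ * x i ∈ H then (1 : ℂ) else 0)

end Wr

/-- The subgroup of `S_n ≀ S_2` of elements acting (via `ι`) as automorphisms of the graph `Γ`. -/
def autSubgroup {n : ℕ} (Γ : SimpleGraph (Fin n ⊕ Fin n)) : Subgroup (Wr n) where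
  carrier := {h | ∀ u v, Γ.Adj (Wr.iota h u) (Wr.iota h v) ↔ Γ.Adj u v}
  one_mem' := by intro u v; simp
  mul_mem' := by
    intro a b ha hb u v
    rw [map_mul, Equiv.Perm.mul_apply, Equiv.Perm.mul_apply, ha, hb]
  inv_mem' := by
    intro a ha u v
    have := ha ((Wr.iota a)⁻¹ u) ((Wr.iota a)⁻¹ v)
    simpa [map_inv] using this.symm

end


noncomputable section AuxGI

open Finset

namespace WrAux

variable {n m : ℕ}

lemma bit_mul (x y : Wr n) : (x * y).bit = x.bit + y.bit := rfl

/-- the sign of the bit of an element -/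
def sgn {n : ℕ} (x : Wr n) : ℂ := if x.bit = 0 then 1 else -1

lemma sgn_conj (x : Wr n) : (starRingEnd ℂ) (sgn x) = sgn x := by
  unfold sgn; split <;> simp

lemma sgn_ne_zero (x : Wr n) : sgn x ≠ 0 := by
  unfold sgn; split <;> norm_num

lemma sgn_mul_bit0 {y : Wr n} (hy : y.bit = 0) (x : Wr n) : sgn (x * y) = sgn x := by
  simp [sgn, bit_mul, hy]

lemma sgn_mul_bit1 {y : Wr n} (hy : y.bit = 1) (x : Wr n) : sgn (x * y) = -sgn x := by
  by_cases hb : x.bit = 0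
  · simp [sgn, bit_mul, hy, hb, show ((0:ZMod 2) + 1 ≠ 0) by decide]
  · have hb1 : x.bit = 1 := by
      have : ∀ b : ZMod 2, b ≠ 0 → b = 1 := by decide
      exact this _ hb
    simp [sgn, bit_mul, hy, hb1, show ((1:ZMod 2) + 1 = 0) by decide,
      show ((1:ZMod 2) ≠ 0) by decide]

lemma swap_bit {k : Wr n} (h : Wr.IsSwap k) : k.bit = 1 := by
  obtain ⟨g, rfl⟩ := h; rfl

lemma swap_mul_self {k : Wr n} (h : Wr.IsSwap k) : k * k = 1 := by
  obtain ⟨g, rfl⟩ := h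
  show Wr.mul _ _ = _
  ext <;> simp [Wr.mul, show ((1:ZMod 2) ≠ 0) by decide,
    show ((1:ZMod 2) + 1 = 0) by decide] <;> rfl

lemma eq_mul_swap_iff {k x g : Wr n} (hk : Wr.IsSwap k) : x = g * k ↔ g = x * k := by
  constructor <;> rintro rfl <;> rw [mul_assoc, swap_mul_self hk, mul_one]

lemma ne_mul_swap {k : Wr n} (hk : Wr.IsSwap k) (d : Wr n) : d ≠ d * k := by
  intro h
  have h2 := congrArg Wr.bit h
  rw [bit_mul, swap_bit hk] at h2
  exact (by decide : ∀ b : ZMod 2, b ≠ b + 1) _ h2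

lemma sum_prod_eq {β : Type*} [Fintype β] (F : Fin m → β → ℂ) :
    ∑ x : Fin m → β, ∏ i, F i (x i) = ∏ i, ∑ g, F i g := by
  classical
  rw [show (∏ i, ∑ g, F i g) = ∏ i, ∑ g ∈ (Finset.univ : Finset β), F i g from rfl,
    Finset.prod_univ_sum, Fintype.piFinset_univ]

lemma inner_prodform (κ₁ κ₂ : ℂ) (F G : Fin m → Wr n → ℂ) :
    inner (𝕜 := ℂ)
      (((WithLp.equiv 2 ((Fin m → Wr n) → ℂ)).symm fun x => κ₁ * ∏ i, F i (x i) : GIHilb n m))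
      (((WithLp.equiv 2 ((Fin m → Wr n) → ℂ)).symm fun x => κ₂ * ∏ i, G i (x i) : GIHilb n m))
      = (starRingEnd ℂ) κ₁ * κ₂ * ∏ i, ∑ g, (starRingEnd ℂ) (F i g) * G i g := by
  rw [PiLp.inner_apply]
  simp only [WithLp.equiv_symm_apply, PiLp.toLp_apply, RCLike.inner_apply, map_mul, map_prod]
  rw [← sum_prod_eq (fun i g => (starRingEnd ℂ) (F i g) * G i g)]
  rw [Finset.mul_sum]
  refine Finset.sum_congr rfl fun x _ => ?_
  rw [Finset.prod_mul_distrib]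
  ring

lemma sum_ind (H : Subgroup (Wr n)) (c : Wr n) :
    ∑ g : Wr n, (if c⁻¹ * g ∈ H then (1:ℂ) else 0) = (Nat.card H : ℂ) := by
  classical
  rw [← Fintype.sum_equiv (Equiv.mulLeft c)
      (fun g => if g ∈ H then (1:ℂ) else 0)
      (fun g => if c⁻¹ * g ∈ H then (1:ℂ) else 0)
      (fun g => by simp)]
  rw [Finset.sum_boole]
  rw [Nat.card_eq_fintype_card]
  norm_cast
  convert (Fintype.card_subtype (fun g : Wr n => g ∈ H)).symm using 2

lemma sum_sgn_ind (H : Subgroup (Wr n)) (hH : ∀ h : Wr n, h ∈ H → h.bit = 0) (c : Wr n) :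
    ∑ g : Wr n, (starRingEnd ℂ) (sgn g) * (if c⁻¹ * g ∈ H then (1:ℂ) else 0)
      = sgn c * (Nat.card H : ℂ) := by
  have key : ∀ g : Wr n, (starRingEnd ℂ) (sgn g) * (if c⁻¹ * g ∈ H then (1:ℂ) else 0)
      = sgn c * (if c⁻¹ * g ∈ H then (1:ℂ) else 0) := by
    intro g
    rw [sgn_conj]
    by_cases hg : c⁻¹ * g ∈ H
    · have hb := hH _ hg
      have hgc : g = c * (c⁻¹ * g) := by group
      rw [hgc, sgn_mul_bit0 hb]
    · simp [hg]
  rw [Finset.sum_congr rfl fun g _ => key g, ← Finset.mul_sum, sum_ind]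

lemma sum_pair_sgn {k : Wr n} (hk : Wr.IsSwap k) (d : Wr n) :
    ∑ g : Wr n, (starRingEnd ℂ) (if g = d ∨ g = d * k then (1:ℂ) else 0) * sgn g = 0 := by
  have hne := ne_mul_swap hk d
  have key : ∀ g : Wr n, (starRingEnd ℂ) (if g = d ∨ g = d * k then (1:ℂ) else 0) * sgn g
      = if g ∈ ({d, d * k} : Finset (Wr n)) then sgn g else 0 := by
    intro g
    by_cases h : g = d ∨ g = d * k <;> simp [h]
  rw [Finset.sum_congr rfl fun g _ => key g, Finset.sum_ite_mem, Finset.univ_inter,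
    Finset.sum_pair hne, sgn_mul_bit1 (swap_bit hk), add_neg_cancel]

lemma sum_ind_pair {k : Wr n} (hk : Wr.IsSwap k) (H : Subgroup (Wr n)) (hkH : k ∈ H)
    (c x : Wr n) :
    ∑ g ∈ Finset.univ.filter (fun g => c⁻¹ * g ∈ H),
        (if x = g ∨ x = g * k then (1:ℂ) else 0)
      = 2 * (if c⁻¹ * x ∈ H then (1:ℂ) else 0) := by
  classical
  have hne := ne_mul_swap hk x
  have key : ∀ g : Wr n, ((if x = g ∨ x = g * k then (1:ℂ) else 0))
      = if g ∈ ({x, x * k} : Finset (Wr n)) then 1 else 0 := by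
    intro g
    have h1 : (x = g) ↔ (g = x) := eq_comm
    have h2 : (x = g * k) ↔ (g = x * k) := eq_mul_swap_iff hk
    simp only [Finset.mem_insert, Finset.mem_singleton, h1, h2]
  rw [Finset.sum_congr rfl fun g _ => key g, Finset.sum_ite_mem]
  have hxk : c⁻¹ * (x * k) ∈ H ↔ c⁻¹ * x ∈ H := by
    rw [← mul_assoc]
    exact H.mul_mem_cancel_right hkH
  by_cases hx : c⁻¹ * x ∈ H
  · have hsub : Finset.univ.filter (fun g => c⁻¹ * g ∈ H) ∩ {x, x * k}
        = ({x, x * k} : Finset (Wr n)) := by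
      ext g
      simp only [Finset.mem_inter, Finset.mem_filter, Finset.mem_univ, true_and,
        Finset.mem_insert, Finset.mem_singleton]
      constructor
      · tauto
      · rintro (rfl | rfl)
        · exact ⟨hx, Or.inl rfl⟩
        · exact ⟨hxk.mpr hx, Or.inr rfl⟩
    rw [hsub, Finset.sum_pair hne]
    simp [hx]; ring
  · have hsub : Finset.univ.filter (fun g => c⁻¹ * g ∈ H) ∩ {x, x * k}
        = (∅ : Finset (Wr n)) := by
      ext g
      simp only [Finset.mem_inter, Finset.mem_filter, Finset.mem_univ, true_and,
        Finset.mem_insert, Finset.mem_singleton, Finset.notMem_empty, iff_false, not_and]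
      intro hg
      rintro (rfl | rfl)
      · exact hx hg
      · exact hx (hxk.mp hg)
    rw [hsub]
    simp [hx]

lemma card_pos (H : Subgroup (Wr n)) : 0 < Nat.card H := Nat.card_pos

lemma inner_cosetState_self (H : Subgroup (Wr n)) (c : Fin m → Wr n) :
    inner (𝕜 := ℂ) (Wr.cosetState H m c) (Wr.cosetState H m c) = 1 := by
  have hcard : (0:ℝ) < (Nat.card H : ℝ) := by exact_mod_cast card_pos H
  have h := inner_prodform (n := n) (m := m)
    ((Real.sqrt ((Nat.card H : ℝ) ^ m))⁻¹ : ℂ) ((Real.sqrt ((Nat.card H : ℝ) ^ m))⁻¹ : ℂ)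
    (fun i g => if (c i)⁻¹ * g ∈ H then (1:ℂ) else 0)
    (fun i g => if (c i)⁻¹ * g ∈ H then (1:ℂ) else 0)
  rw [Wr.cosetState, h]
  have hind : ∀ i : Fin m, (∑ g : Wr n, (starRingEnd ℂ)
        (if (c i)⁻¹ * g ∈ H then (1:ℂ) else 0) * (if (c i)⁻¹ * g ∈ H then (1:ℂ) else 0))
      = (Nat.card H : ℂ) := by
    intro i
    rw [← sum_ind H (c i)]
    refine Finset.sum_congr rfl fun g _ => ?_
    split <;> simp
  rw [Finset.prod_congr rfl fun i _ => hind i, Finset.prod_const, Finset.card_univ,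
    Fintype.card_fin]
  have hs : ((0:ℝ)) ≤ (Nat.card H : ℝ) ^ m := by positivity
  have hkey : ((Real.sqrt ((Nat.card H : ℝ) ^ m))⁻¹ : ℝ)
      * (Real.sqrt ((Nat.card H : ℝ) ^ m))⁻¹ * ((Nat.card H : ℝ) ^ m) = 1 := by
    rw [← mul_inv, Real.mul_self_sqrt hs, inv_mul_cancel₀ (by positivity)]
  calc (starRingEnd ℂ) ((Real.sqrt ((Nat.card H : ℝ) ^ m))⁻¹ : ℂ)
        * ((Real.sqrt ((Nat.card H : ℝ) ^ m))⁻¹ : ℂ) * (Nat.card H : ℂ) ^ m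
      = ((((Real.sqrt ((Nat.card H : ℝ) ^ m))⁻¹
          * (Real.sqrt ((Nat.card H : ℝ) ^ m))⁻¹ * ((Nat.card H : ℝ) ^ m) : ℝ)) : ℂ) := by
        rw [map_inv₀, Complex.conj_ofReal]; push_cast; ring
    _ = 1 := by rw [hkey]; norm_num


/-- The global sign vector `x ↦ ∏ i, sgn (x i)`. -/
def sgnvec (n m : ℕ) : GIHilb n m :=
  (WithLp.equiv 2 ((Fin m → Wr n) → ℂ)).symm fun x => (1:ℂ) * ∏ i, sgn (x i)

lemma sum_ind_sgn (H : Subgroup (Wr n)) (hH : ∀ h : Wr n, h ∈ H → h.bit = 0) (c : Wr n) :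
    ∑ g : Wr n, (starRingEnd ℂ) (if c⁻¹ * g ∈ H then (1:ℂ) else 0) * sgn g
      = sgn c * (Nat.card H : ℂ) := by
  have key : ∀ g : Wr n, (starRingEnd ℂ) (if c⁻¹ * g ∈ H then (1:ℂ) else 0) * sgn g
      = sgn c * (if c⁻¹ * g ∈ H then (1:ℂ) else 0) := by
    intro g
    by_cases hg : c⁻¹ * g ∈ H
    · have hb := hH _ hg
      have hgc : g = c * (c⁻¹ * g) := by group
      simp only [hg, if_pos, map_one, one_mul, mul_one]
      rw [hgc, sgn_mul_bit0 hb]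
    · simp [hg]
  rw [Finset.sum_congr rfl fun g _ => key g, ← Finset.mul_sum, sum_ind]

lemma inner_kvec_sgnvec (hm : 0 < m) {k : Wr n} (hk : Wr.IsSwap k) (d : Fin m → Wr n) :
    inner (𝕜 := ℂ) (Wr.kvec n m k d) (sgnvec n m) = 0 := by
  have h := inner_prodform (n := n) (m := m) ((Real.sqrt (2 ^ m) : ℝ)⁻¹ : ℂ) 1
    (fun i g => if g = d i ∨ g = d i * k then (1:ℂ) else 0) (fun _ g => sgn g)
  rw [Wr.kvec, sgnvec]
  rw [h]
  rw [Finset.prod_eq_zero (Finset.mem_univ (⟨0, hm⟩ : Fin m)) (sum_pair_sgn hk (d ⟨0, hm⟩))]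
  ring

lemma inner_cosetState_sgnvec_ne_zero (H : Subgroup (Wr n))
    (hH : ∀ h : Wr n, h ∈ H → h.bit = 0) (c : Fin m → Wr n) :
    inner (𝕜 := ℂ) (Wr.cosetState H m c) (sgnvec n m) ≠ 0 := by
  have h := inner_prodform (n := n) (m := m)
    ((Real.sqrt ((Nat.card H : ℝ) ^ m))⁻¹ : ℂ) 1
    (fun i g => if (c i)⁻¹ * g ∈ H then (1:ℂ) else 0) (fun _ g => sgn g)
  rw [Wr.cosetState, sgnvec, h]
  rw [Finset.prod_congr rfl fun i _ => sum_ind_sgn H hH (c i)]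
  have hcard : ((Nat.card H : ℂ)) ≠ 0 := Nat.cast_ne_zero.mpr (card_pos H).ne' 
  apply mul_ne_zero
  apply mul_ne_zero
  · rw [map_inv₀, Complex.conj_ofReal]
    simp only [ne_eq, inv_eq_zero, Complex.ofReal_eq_zero]
    have : (0:ℝ) < Real.sqrt ((Nat.card H : ℝ) ^ m) := Real.sqrt_pos.mpr (pow_pos (by exact_mod_cast card_pos H) m)
    exact ne_of_gt this
  · norm_num
  · apply Finset.prod_ne_zero_iff.mpr
    intro i _
    exact mul_ne_zero (sgn_ne_zero _) hcard

lemma cosetState_mem_kSpace {k : Wr n} (hk : Wr.IsSwap k) (H : Subgroup (Wr n)) (hkH : k ∈ H)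
    (c : Fin m → Wr n) : Wr.cosetState H m c ∈ Wr.kSpace n m k := by
  classical
  have hsqrt2 : ((Real.sqrt (2 ^ m) : ℂ)) ≠ 0 := by
    have : (0:ℝ) < Real.sqrt (2 ^ m) := Real.sqrt_pos.mpr (by positivity)
    exact_mod_cast ne_of_gt this
  have h2m : ((2:ℂ) ^ m) ≠ 0 := pow_ne_zero _ two_ne_zero
  set S : Fin m → Finset (Wr n) := fun i => Finset.univ.filter (fun g => (c i)⁻¹ * g ∈ H)
    with hS
  set β : ℂ := ((Real.sqrt ((Nat.card H : ℝ) ^ m))⁻¹ : ℂ) * ((Real.sqrt (2 ^ m) : ℂ))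
      * ((2:ℂ) ^ m)⁻¹ with hβ
  have hψ : Wr.cosetState H m c = β • ∑ d ∈ Fintype.piFinset S, Wr.kvec n m k d := by
    apply (WithLp.linearEquiv 2 ℂ ((Fin m → Wr n) → ℂ)).injective
    rw [map_smul, map_sum]
    funext x
    simp only [WithLp.coe_linearEquiv, WithLp.equiv_symm_apply, WithLp.ofLp_toLp, Wr.cosetState, Wr.kvec, Equiv.apply_symm_apply,
      Pi.smul_apply, Finset.sum_apply, smul_eq_mul]
    rw [← Finset.mul_sum]
    rw [← Finset.prod_univ_sum S (fun i g => if x i = g ∨ x i = g * k then (1:ℂ) else 0)]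
    have hrow : ∀ i : Fin m, (∑ g ∈ S i, (if x i = g ∨ x i = g * k then (1:ℂ) else 0))
        = 2 * (if (c i)⁻¹ * x i ∈ H then (1:ℂ) else 0) :=
      fun i => sum_ind_pair hk H hkH (c i) (x i)
    rw [Finset.prod_congr rfl fun i _ => hrow i, Finset.prod_mul_distrib, Finset.prod_const,
      Finset.card_univ, Fintype.card_fin]
    set P : ℂ := ∏ i, (if (c i)⁻¹ * x i ∈ H then (1:ℂ) else 0) with hP
    set s : ℂ := ((Real.sqrt (2 ^ m) : ℂ)) with hs
    set t : ℂ := (2:ℂ) ^ m with ht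
    set a : ℂ := ((Real.sqrt ((Nat.card H : ℝ) ^ m))⁻¹ : ℂ) with ha
    calc a * P
        = (a * P) * (s * s⁻¹) * (t⁻¹ * t) := by
          rw [mul_inv_cancel₀ hsqrt2, inv_mul_cancel₀ h2m, mul_one, mul_one]
      _ = (a * s * t⁻¹) * (s⁻¹ * (t * P)) := by ring
      _ = β * (s⁻¹ * (t * P)) := by rw [hβ]
  rw [hψ]
  exact Submodule.smul_mem _ _ (Submodule.sum_mem _ fun d _ =>
    Submodule.subset_span ⟨d, rfl⟩)

noncomputable def iso_of_bit1 {Γ₁ Γ₂ : SimpleGraph (Fin n)} {h : Wr n}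
    (hmem : h ∈ autSubgroup (Γ₁ ⊕g Γ₂)) (hb : h.bit = 1) : Γ₁ ≃g Γ₂ := by
  refine ⟨h.snd, ?_⟩
  intro i j
  have key := hmem (Sum.inl i) (Sum.inl j)
  have h1 : ∀ i, Wr.iota h (Sum.inl i) = Sum.inr (h.snd i) := by
    intro i
    simp [Wr.iota, hb, show ((1:ZMod 2) ≠ 0) by decide, Equiv.Perm.mul_apply]
  rw [h1 i, h1 j] at key
  simpa [SimpleGraph.sum_adj] using key

lemma swap_mem_of_iso {Γ₁ Γ₂ : SimpleGraph (Fin n)} (φ : Γ₁ ≃g Γ₂) :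
    ∃ k : Wr n, Wr.IsSwap k ∧ k ∈ autSubgroup (Γ₁ ⊕g Γ₂) := by
  set e : Equiv.Perm (Fin n) := φ.toEquiv with he
  refine ⟨⟨e⁻¹, e, 1⟩, ⟨e⁻¹, by rw [inv_inv]⟩, ?_⟩
  intro u v
  have h1 : ∀ i, Wr.iota (⟨e⁻¹, e, 1⟩ : Wr n) (Sum.inl i) = Sum.inr (e i) := by
    intro i
    simp [Wr.iota, show ((1:ZMod 2) ≠ 0) by decide, Equiv.Perm.mul_apply]
  have h2 : ∀ i, Wr.iota (⟨e⁻¹, e, 1⟩ : Wr n) (Sum.inr i) = Sum.inl (e⁻¹ i) := by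
    intro i
    simp [Wr.iota, show ((1:ZMod 2) ≠ 0) by decide, Equiv.Perm.mul_apply]
  rcases u with i | i <;> rcases v with j | j
  · rw [h1 i, h1 j]
    have hh : Γ₂.Adj (e i) (e j) ↔ Γ₁.Adj i j := φ.map_rel_iff
    simpa [SimpleGraph.sum_adj] using hh
  · rw [h1 i, h2 j]
    simp [SimpleGraph.sum_adj]
  · rw [h2 i, h1 j]
    simp [SimpleGraph.sum_adj]
  · rw [h2 i, h2 j]
    have : Γ₁.Adj (e⁻¹ i) (e⁻¹ j) ↔ Γ₂.Adj i j := by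
      rw [← φ.map_rel_iff]
      show Γ₂.Adj (e (e⁻¹ i)) (e (e⁻¹ j)) ↔ _
      simp
    simpa [SimpleGraph.sum_adj] using this

lemma bit_eq_zero {Γ₁ Γ₂ : SimpleGraph (Fin n)} (hniso : IsEmpty (Γ₁ ≃g Γ₂)) :
    ∀ h ∈ autSubgroup (Γ₁ ⊕g Γ₂), Wr.bit h = 0 := by
  intro h hh
  by_contra hb
  have hb1 : h.bit = 1 := (by decide : ∀ b : ZMod 2, b ≠ 0 → b = 1) _ hb
  exact hniso.false (iso_of_bit1 hh hb1)

end WrAux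

end AuxGI

open scoped ComplexOrder

/-- If `2^m > n!`, then `Γ₁` and `Γ₂` are isomorphic if and only if the tensor product of coset
states `ψ_c` of the automorphism subgroup satisfies `⟪ψ_c, P₁ ψ_c⟫ = 1`. -/
theorem iso_iff_inner_proj_H1_eq_one
    (n m : ℕ) (hn : 0 < n) (hm : 0 < m) (hnm : n.factorial < 2 ^ m)
    (Γ₁ Γ₂ : SimpleGraph (Fin n))
    (c : Fin m → Wr n) :
    Nonempty (Γ₁ ≃g Γ₂) ↔
      inner (𝕜 := ℂ) (Wr.cosetState (autSubgroup (Γ₁ ⊕g Γ₂)) m c)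
        (((Wr.H1 n m).orthogonalProjectionOnto
          (Wr.cosetState (autSubgroup (Γ₁ ⊕g Γ₂)) m c) : GIHilb n m)) = 1 := by
  classical
  set H : Subgroup (Wr n) := autSubgroup (Γ₁ ⊕g Γ₂) with hHdef
  set ψ : GIHilb n m := Wr.cosetState H m c with hψdef
  constructor
  · rintro ⟨φ⟩
    obtain ⟨k, hk, hkH⟩ := WrAux.swap_mem_of_iso φ
    have hmem : ψ ∈ Wr.H1 n m := by
      have h1 := WrAux.cosetState_mem_kSpace hk H hkH c
      have h2 : Wr.kSpace n m k ≤ Wr.H1 n m :=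
        le_iSup₂ (f := fun (k : Wr n) (_ : k ∈ {k : Wr n | Wr.IsSwap k}) => Wr.kSpace n m k)
          k hk
      exact h2 h1
    rw [show ((Wr.H1 n m).orthogonalProjectionOnto ψ : GIHilb n m) = ψ from
        Submodule.starProjection_eq_self_iff.mpr hmem]
    exact WrAux.inner_cosetState_self H c
  · intro hyp
    by_contra hniso
    have hniso' : IsEmpty (Γ₁ ≃g Γ₂) := not_nonempty_iff.mp hniso
    have hbit := WrAux.bit_eq_zero hniso'
    set p : GIHilb n m := ((Wr.H1 n m).orthogonalProjectionOnto ψ : GIHilb n m) with hp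
    have hψp : inner (𝕜 := ℂ) ψ p = 1 := hyp
    have horth : inner (𝕜 := ℂ) (ψ - p) p = 0 :=
      (Wr.H1 n m).starProjection_inner_eq_zero ψ p (SetLike.coe_mem _)
    have h3 : inner (𝕜 := ℂ) ψ p - inner (𝕜 := ℂ) p p = 0 := by
      rw [← inner_sub_left]; exact horth
    have hpp : inner (𝕜 := ℂ) p p = 1 := by
      rw [← sub_eq_zero.mp h3]; exact hψp
    have hpψ : inner (𝕜 := ℂ) p ψ = 1 := by
      rw [← inner_conj_symm, hψp]; simp
    have hψψ : inner (𝕜 := ℂ) ψ ψ = 1 := WrAux.inner_cosetState_self H c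
    have hz : inner (𝕜 := ℂ) (ψ - p) (ψ - p) = 0 := by
      rw [inner_sub_left, inner_sub_right, inner_sub_right, hψψ, hψp, hpψ, hpp]; ring
    have hψeq : ψ = p := by
      have h4 := inner_self_eq_zero.mp hz
      rwa [sub_eq_zero] at h4
    have hmem : ψ ∈ Wr.H1 n m := by
      rw [hψeq]; exact SetLike.coe_mem _
    have hle : Wr.H1 n m ≤ (Submodule.span ℂ {WrAux.sgnvec n m})ᗮ := by
      rw [Wr.H1]
      refine iSup₂_le fun k hk => ?_
      rw [Wr.kSpace, Submodule.span_le]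
      rintro _ ⟨d, rfl⟩
      rw [SetLike.mem_coe, Submodule.mem_orthogonal_singleton_iff_inner_left]
      exact WrAux.inner_kvec_sgnvec hm hk d
    have h0 : inner (𝕜 := ℂ) ψ (WrAux.sgnvec n m) = 0 :=
      Submodule.mem_orthogonal_singleton_iff_inner_left.mp (hle hmem)
    exact WrAux.inner_cosetState_sgnvec_ne_zero H hbit c h0
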